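/- Every simple graph G (possibly infinite) admits an orientation D with the following property: for every injective sequence (v_n)_{n∈ℕ} of vertices of G such that either (v_n, v_{n+1}) is an edge of D for every n ∈ ℕ, or (v_{n+1}, v_n) is an edge of D for every n ∈ ℕ, the set {v_n : n ∈ ℕ} has finite diameter in G, i.e., sup{ d_G(v_m, v_n) : m, n ∈ ℕ } < ∞. -/

import Mathlib

/-- An orientation of a simple graph `G`: an asymmetric relation `D` whose
symmetrization is exactly the adjacency relation of `G`. -/
def IsOrientation {V : Type*} (G : SimpleGraph V) (D : V → V → Prop) : Prop :=
  (∀ u v, ¬ (D u v ∧ D v u)) ∧ ∀ u v, G.Adj u v ↔ (D u v ∨ D v u)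

/-- A digraph structure on a relation: no loops and no pairs of opposite arcs. -/
def IsDigraph {W : Type*} (E : W → W → Prop) : Prop :=
  ∀ u v, ¬ (E u v ∧ E v u)

/-- `G ⇒ E`: every orientation `D` of `G` contains an isometric copy of the digraph `E`:
an injective map `f` inducing an isomorphism onto its image, preserving orientations,
such that distances (in the underlying undirected graphs) are preserved. -/
def IsoRamseyArrow {V W : Type*} (G : SimpleGraph V) (E : W → W → Prop) : Prop :=
  ∀ D : V → V → Prop, IsOrientation G D →
    ∃ f : W → V, Function.Injective f ∧
      (∀ u v, E u v ↔ D (f u) (f v)) ∧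
      (∀ u v, (SimpleGraph.fromRel E).edist u v = G.edist (f u) (f v))

/-- Abstract lemma: a sequence of naturals that can only move (by ±1) out of a
`p`-state, and always moves into a non-`p`-state, stays within `r 0 + 1`. -/
lemma aux_seq_bound (r : ℕ → ℕ) (p : ℕ → Prop)
    (h : ∀ n, r (n+1) = r n ∨
      (p (r n) ∧ ¬ p (r (n+1)) ∧ (r (n+1) = r n + 1 ∨ r n = r (n+1) + 1))) :
    ∀ n, r n ≤ r 0 + 1 := by
  have key : ∀ n, r n = r 0 ∨ (¬ p (r n) ∧ r n ≤ r 0 + 1) := by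
    intro n
    induction n with
    | zero => exact Or.inl rfl
    | succ n ih =>
      rcases h n with hstay | ⟨hp, hnp, hmove⟩
      · rcases ih with h1 | ⟨h2, h3⟩
        · exact Or.inl (hstay.trans h1)
        · exact Or.inr ⟨hstay ▸ h2, hstay ▸ h3⟩
      · rcases ih with h1 | ⟨h2, h3⟩
        · refine Or.inr ⟨hnp, ?_⟩
          rcases hmove with h4 | h4 <;> omega
        · exact absurd hp h2
  intro n
  rcases key n with h1 | ⟨_, h2⟩ <;> omega

theorem stmt18 (V : Type*) (G : SimpleGraph V) :
    ∃ D : V → V → Prop, IsOrientation G D ∧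
      ∀ v : ℕ → V, Function.Injective v →
        ((∀ n, D (v n) (v (n + 1))) ∨ (∀ n, D (v (n + 1)) (v n))) →
        ∃ b : ℕ, ∀ m n, G.edist (v m) (v n) ≤ (b : ℕ∞) := by
  classical
  -- a root in each connected component
  set rt : V → V := fun x => (G.connectedComponentMk x).out with hrtdef
  have hreach : ∀ x, G.Reachable x (rt x) := by
    intro x
    have : G.connectedComponentMk (rt x) = G.connectedComponentMk x :=
      (G.connectedComponentMk x).out_eq
    exact (SimpleGraph.ConnectedComponent.exact this).symm
  -- the rank of a vertex: distance to the root of its component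
  set rk : V → ℕ := fun x => (G.edist x (rt x)).toNat with hrkdef
  have hrk_coe : ∀ x, G.edist x (rt x) = (rk x : ℕ∞) := by
    intro x
    have hne : G.edist x (rt x) ≠ ⊤ :=
      SimpleGraph.edist_ne_top_iff_reachable.mpr (hreach x)
    exact (ENat.coe_toNat hne).symm
  have hrt_adj : ∀ {u w : V}, G.Adj u w → rt u = rt w := by
    intro u w h
    simp only [hrtdef,
      SimpleGraph.ConnectedComponent.connectedComponentMk_eq_of_adj h]
  -- adjacent vertices have ranks differing by at most one
  have hrk_adj : ∀ {u w : V}, G.Adj u w → rk u ≤ rk w + 1 := by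
    intro u w h
    have h1 : G.edist u (rt u) ≤ G.edist u w + G.edist w (rt w) := by
      rw [hrt_adj h]
      exact SimpleGraph.edist_triangle
    rw [hrk_coe u, hrk_coe w, (SimpleGraph.edist_eq_one_iff_adj).mpr h] at h1
    have h2 : (rk u : ℕ∞) ≤ ((rk w + 1 : ℕ) : ℕ∞) := by
      push_cast
      rw [add_comm]
      exact h1
    exact_mod_cast h2
  -- the orientation
  set D : V → V → Prop := fun u w => G.Adj u w ∧
      ((rk u < rk w ∧ Even (rk u)) ∨ (rk w < rk u ∧ Odd (rk w)) ∨
        (rk u = rk w ∧ WellOrderingRel u w)) with hDdef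
  refine ⟨D, ⟨?_, ?_⟩, ?_⟩
  · -- asymmetry
    rintro u w ⟨⟨hadj, h1⟩, ⟨_, h2⟩⟩
    rcases h1 with ⟨ha, hb⟩ | ⟨ha, hb⟩ | ⟨ha, hb⟩ <;>
      rcases h2 with ⟨hc, hd⟩ | ⟨hc, hd⟩ | ⟨hc, hd⟩
    · omega
    · exact (Nat.not_even_iff_odd.mpr hd) hb
    · omega
    · exact (Nat.not_even_iff_odd.mpr hb) hd
    · omega
    · omega
    · omega
    · omega
    · exact Std.Irrefl.irrefl (r := WellOrderingRel) u (IsTrans.trans _ _ _ hb hd)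
  · -- symmetrization is adjacency
    intro u w
    constructor
    · intro hadj
      rcases lt_trichotomy (rk u) (rk w) with hlt | heq | hgt
      · have hw : rk w = rk u + 1 := by have := hrk_adj hadj.symm; omega
        by_cases he : Even (rk u)
        · exact Or.inl ⟨hadj, Or.inl ⟨hlt, he⟩⟩
        · exact Or.inr ⟨hadj.symm, Or.inr (Or.inl ⟨hlt, Nat.not_even_iff_odd.mp he⟩)⟩
      · rcases trichotomous_of WellOrderingRel u w with hr | hew | hr
        · exact Or.inl ⟨hadj, Or.inr (Or.inr ⟨heq, hr⟩)⟩
        · exact absurd hew hadj.ne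
        · exact Or.inr ⟨hadj.symm, Or.inr (Or.inr ⟨heq.symm, hr⟩)⟩
      · have hw : rk u = rk w + 1 := by have := hrk_adj hadj; omega
        by_cases he : Even (rk w)
        · exact Or.inr ⟨hadj.symm, Or.inl ⟨hgt, he⟩⟩
        · exact Or.inl ⟨hadj, Or.inr (Or.inl ⟨hgt, Nat.not_even_iff_odd.mp he⟩)⟩
    · rintro (⟨h, _⟩ | ⟨h, _⟩)
      · exact h
      · exact h.symm
  · -- bounded diameter of directed sequences
    intro v _ hdir
    have hadjseq : ∀ n, G.Adj (v n) (v (n + 1)) := by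
      rcases hdir with h | h
      · exact fun n => (h n).1
      · exact fun n => ((h n).1).symm
    have hrtc : ∀ n, rt (v n) = rt (v 0) := by
      intro n
      induction n with
      | zero => rfl
      | succ n ih => exact (hrt_adj (hadjseq n)).symm.trans ih
    have hbnd : ∀ n, rk (v n) ≤ rk (v 0) + 1 := by
      rcases hdir with h | h
      · refine aux_seq_bound (fun n => rk (v n)) Even ?_
        intro n
        show rk (v (n+1)) = rk (v n) ∨ (Even (rk (v n)) ∧ ¬ Even (rk (v (n+1))) ∧
          (rk (v (n+1)) = rk (v n) + 1 ∨ rk (v n) = rk (v (n+1)) + 1))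
        have hd1 := hrk_adj (hadjseq n)
        have hd2 := hrk_adj (hadjseq n).symm
        rcases (h n).2 with ⟨ha, hb⟩ | ⟨ha, hb⟩ | ⟨ha, _⟩
        · refine Or.inr ⟨hb, ?_, Or.inl (by omega)⟩
          have : rk (v (n+1)) = rk (v n) + 1 := by omega
          rw [this]
          simpa [Nat.even_add_one] using hb
        · have heq : rk (v n) = rk (v (n+1)) + 1 := by omega
          refine Or.inr ⟨?_, Nat.not_even_iff_odd.mpr hb, Or.inr heq⟩
          rw [heq]
          simpa [Nat.even_add_one, Nat.not_even_iff_odd] using hb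
        · exact Or.inl ha.symm
      · refine aux_seq_bound (fun n => rk (v n)) Odd ?_
        intro n
        show rk (v (n+1)) = rk (v n) ∨ (Odd (rk (v n)) ∧ ¬ Odd (rk (v (n+1))) ∧
          (rk (v (n+1)) = rk (v n) + 1 ∨ rk (v n) = rk (v (n+1)) + 1))
        have hd1 := hrk_adj (hadjseq n)
        have hd2 := hrk_adj (hadjseq n).symm
        rcases (h n).2 with ⟨ha, hb⟩ | ⟨ha, hb⟩ | ⟨ha, _⟩
        · -- rk (v (n+1)) < rk (v n), Even (rk (v (n+1)))
          have heq : rk (v n) = rk (v (n+1)) + 1 := by omega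
          refine Or.inr ⟨?_, Nat.not_odd_iff_even.mpr hb, Or.inr heq⟩
          rw [heq]
          exact Even.add_one hb
        · -- rk (v n) < rk (v (n+1)), Odd (rk (v n))
          have heq : rk (v (n+1)) = rk (v n) + 1 := by omega
          refine Or.inr ⟨hb, ?_, Or.inl heq⟩
          rw [heq]
          exact Nat.not_odd_iff_even.mpr (Odd.add_one hb)
        · exact Or.inl ha
    refine ⟨2 * (rk (v 0) + 1), ?_⟩
    intro m n
    have h1 : G.edist (v m) (v n) ≤
        G.edist (v m) (rt (v 0)) + G.edist (rt (v 0)) (v n) :=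
      SimpleGraph.edist_triangle
    have h2 : G.edist (v m) (rt (v 0)) = (rk (v m) : ℕ∞) := by
      rw [← hrtc m]; exact hrk_coe _
    have h3 : G.edist (rt (v 0)) (v n) = (rk (v n) : ℕ∞) := by
      rw [SimpleGraph.edist_comm, ← hrtc n]; exact hrk_coe _
    rw [h2, h3] at h1
    refine h1.trans ?_
    have h4 : rk (v m) + rk (v n) ≤ 2 * (rk (v 0) + 1) := by
      have := hbnd m; have := hbnd n; omega
    exact_mod_cast h4
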